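/- Suppose there exist simple 6-(23,7,5), 6-(23,8,136), 6-(23,9,200), 6-(23,10,700), 6-(23,11,1820), 6-(23,12,3640), 6-(23,13,5720), 6-(23,14,7150) and 6-(23,15,7150) designs. Then there exists a simple 6-(46, 15, 80423200) design (note 80423200 = 28120 × 2860). -/

import Mathlib

open Finset

/-- Number of `n`-subsets of `S` containing a fixed `M ⊆ S`. -/
lemma card_between (S M : Finset ℕ) (n : ℕ) (hM : M ⊆ S) (hn : M.card ≤ n) :
    ((S.powersetCard n).filter (fun T => M ⊆ T)).card
      = (S.card - M.card).choose (n - M.card) := by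
  rw [← Finset.card_sdiff_of_subset hM, ← Finset.card_powersetCard]
  apply Finset.card_nbij' (fun T => T \ M) (fun U => U ∪ M)
  · intro T hT
    simp only [Finset.mem_coe, Finset.mem_filter, Finset.mem_powersetCard] at hT ⊢
    exact ⟨Finset.sdiff_subset_sdiff hT.1.1 (le_refl M), by rw [Finset.card_sdiff_of_subset hT.2, hT.1.2]⟩
  · intro U hU
    simp only [Finset.mem_coe, Finset.mem_filter, Finset.mem_powersetCard] at hU ⊢
    have hdisj : Disjoint U M := (Finset.sdiff_disjoint).mono_left hU.1
    refine ⟨⟨Finset.union_subset (hU.1.trans (Finset.sdiff_subset)) hM, ?_⟩,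
      Finset.subset_union_right⟩
    rw [Finset.card_union_of_disjoint hdisj, hU.2]
    omega
  · intro T hT
    simp only [Finset.mem_coe, Finset.mem_filter, Finset.mem_powersetCard] at hT
    exact Finset.sdiff_union_of_subset hT.2
  · intro U hU
    simp only [Finset.mem_coe, Finset.mem_powersetCard] at hU
    exact Finset.union_sdiff_cancel_right ((Finset.sdiff_disjoint).mono_left hU.1)

/-- A 6-design on a 23-set is an `m`-design for `m ≤ 6`, in product form. -/
lemma derived_count (Y : Finset ℕ) (B : Finset (Finset ℕ)) (s lam : ℕ)
    (hY : Y.card = 23)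
    (hb : ∀ b ∈ B, b ⊆ Y ∧ b.card = s)
    (hd : ∀ T ⊆ Y, T.card = 6 → (B.filter (fun b => T ⊆ b)).card = lam)
    (M : Finset ℕ) (hMY : M ⊆ Y) (hm : M.card ≤ 6) :
    (B.filter (fun b => M ⊆ b)).card * (s - M.card).choose (6 - M.card)
      = lam * (23 - M.card).choose (6 - M.card) := by
  have key : ∀ b ∈ B, ((Y.powersetCard 6).filter (fun T => M ⊆ T ∧ T ⊆ b))
      = ((b.powersetCard 6).filter (fun T => M ⊆ T)) := by
    intro b hb'
    ext T
    simp only [mem_filter, mem_powersetCard]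
    constructor
    · rintro ⟨⟨-, hT6⟩, hMT, hTb⟩; exact ⟨⟨hTb, hT6⟩, hMT⟩
    · rintro ⟨⟨hTb, hT6⟩, hMT⟩; exact ⟨⟨hTb.trans (hb b hb').1, hT6⟩, hMT, hTb⟩
  have e1 : ∑ b ∈ B, ((Y.powersetCard 6).filter (fun T => M ⊆ T ∧ T ⊆ b)).card
      = (B.filter (fun b => M ⊆ b)).card * (s - M.card).choose (6 - M.card) := by
    rw [Finset.card_filter (fun b => M ⊆ b) B, Finset.sum_mul]
    apply Finset.sum_congr rfl
    intro b hb'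
    rw [key b hb']
    by_cases hMb : M ⊆ b
    · rw [card_between b M 6 hMb hm, (hb b hb').2, if_pos hMb, one_mul]
    · rw [if_neg hMb, zero_mul, Finset.card_eq_zero, Finset.filter_eq_empty_iff]
      intro T hT
      simp only [mem_powersetCard] at hT
      exact fun hMT => hMb (hMT.trans hT.1)
  have e2 : ∑ T ∈ Y.powersetCard 6, (B.filter (fun b => M ⊆ T ∧ T ⊆ b)).card
      = lam * (23 - M.card).choose (6 - M.card) := by
    have h0 : ∀ T ∈ Y.powersetCard 6, (B.filter (fun b => M ⊆ T ∧ T ⊆ b)).card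
        = if M ⊆ T then lam else 0 := by
      intro T hT
      simp only [mem_powersetCard] at hT
      by_cases hMT : M ⊆ T
      · simp only [hMT, true_and, if_pos hMT]
        exact hd T hT.1 hT.2
      · simp [hMT]
    rw [Finset.sum_congr rfl h0, Finset.sum_ite, Finset.sum_const_zero, add_zero,
      Finset.sum_const, card_between Y M 6 hMY hm, hY, smul_eq_mul, mul_comm]
  rw [← e1, ← e2]
  have swap : ∀ b ∈ B, ((Y.powersetCard 6).filter (fun T => M ⊆ T ∧ T ⊆ b)).card
      = ∑ T ∈ Y.powersetCard 6, if M ⊆ T ∧ T ⊆ b then 1 else 0 := by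
    intro b _; rw [Finset.card_filter]
  rw [Finset.sum_congr rfl swap, Finset.sum_comm]
  apply Finset.sum_congr rfl
  intro T _
  rw [Finset.card_filter]

/-- λ values of the nine hypothesised designs. -/
def lamT : ℕ → ℕ
  | 7 => 5 | 8 => 136 | 9 => 200 | 10 => 700 | 11 => 1820
  | 12 => 3640 | 13 => 5720 | 14 => 7150 | 15 => 7150 | _ => 0

/-- `aT m i` = number of blocks of the size-`i` family on a 23-set
containing a fixed `m`-subset (for `m ≤ 6`). -/
def aT (m i : ℕ) : ℕ :=
  if i ≤ 6 then (if m ≤ i then (23 - m).choose (i - m) else 0)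
  else lamT i * (23 - m).choose (6 - m) / ((i - m).choose (6 - m))

lemma sum_check (m : ℕ) (hm : m ≤ 6) :
    ∑ i ∈ Finset.range 16, aT m i * aT (6 - m) (15 - i) = 80423200 := by
  interval_cases m <;> decide

/-- Count for a hypothesised design of size `7 ≤ s`, in terms of `aT`. -/
lemma design_aT (Y : Finset ℕ) (B : Finset (Finset ℕ)) (s : ℕ)
    (hY : Y.card = 23) (hs7 : 7 ≤ s)
    (hb : ∀ b ∈ B, b ⊆ Y ∧ b.card = s)
    (hd : ∀ T ⊆ Y, T.card = 6 → (B.filter (fun b => T ⊆ b)).card = lamT s)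
    (M : Finset ℕ) (hMY : M ⊆ Y) (hm : M.card ≤ 6) :
    (B.filter (fun b => M ⊆ b)).card = aT M.card s := by
  have h := derived_count Y B s (lamT s) hY hb hd M hMY hm
  have hpos : 0 < (s - M.card).choose (6 - M.card) :=
    Nat.choose_pos (by omega)
  rw [aT, if_neg (by omega)]
  exact (Nat.div_eq_of_eq_mul_left hpos h.symm).symm

/-- Count for the complete `i`-subset family, in terms of `aT` (for `i ≤ 6`). -/
lemma complete_aT (Y : Finset ℕ) (i : ℕ) (hY : Y.card = 23) (hi : i ≤ 6)
    (M : Finset ℕ) (hMY : M ⊆ Y) (hm : M.card ≤ 6) :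
    ((Y.powersetCard i).filter (fun b => M ⊆ b)).card = aT M.card i := by
  rw [aT, if_pos hi]
  by_cases hmi : M.card ≤ i
  · rw [if_pos hmi, card_between Y M i hMY hmi, hY]
  · rw [if_neg hmi, Finset.card_eq_zero, Finset.filter_eq_empty_iff]
    intro b hbmem hMb
    simp only [mem_powersetCard] at hbmem
    exact hmi (hbmem.2 ▸ Finset.card_le_card hMb)

/-- `SimpleDesignExists t v k lam` asserts the existence of a simple
`t-(v, k, lam)` design: a `v`-set `X` together with a set `B` of distinct
`k`-element subsets of `X` (blocks) such that every `t`-element subset of `X`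
is contained in exactly `lam` blocks. -/
def SimpleDesignExists (t v k lam : ℕ) : Prop :=
  ∃ (X : Finset ℕ) (B : Finset (Finset ℕ)),
    X.card = v ∧
    (∀ b ∈ B, b ⊆ X ∧ b.card = k) ∧
    (∀ T ⊆ X, T.card = t → (B.filter (fun b => T ⊆ b)).card = lam)

/-- Transport a design onto any ground set of the right size. -/
lemma transport {t v k lam : ℕ} (h : SimpleDesignExists t v k lam)
    (Y : Finset ℕ) (hY : Y.card = v) :
    ∃ B : Finset (Finset ℕ),
      (∀ b ∈ B, b ⊆ Y ∧ b.card = k) ∧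
      (∀ T ⊆ Y, T.card = t → (B.filter (fun b => T ⊆ b)).card = lam) := by
  obtain ⟨X, B, hX, hb, hd⟩ := h
  have hcard : X.card = Y.card := by rw [hX, hY]
  set e := Finset.equivOfCardEq hcard with he
  classical
  set f : ℕ → ℕ := fun x => if hx : x ∈ X then (e ⟨x, hx⟩ : ℕ) else 0 with hf
  set g : ℕ → ℕ := fun y => if hy : y ∈ Y then (e.symm ⟨y, hy⟩ : ℕ) else 0 with hg
  have hfX : ∀ x ∈ X, f x ∈ Y := by
    intro x hx; simp only [hf, dif_pos hx]; exact (e ⟨x, hx⟩).2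
  have hgY : ∀ y ∈ Y, g y ∈ X := by
    intro y hy; simp only [hg, dif_pos hy]; exact (e.symm ⟨y, hy⟩).2
  have hgf : ∀ x ∈ X, g (f x) = x := by
    intro x hx
    simp only [hf, hg, dif_pos hx, dif_pos (e ⟨x, hx⟩).2]
    have h' : (⟨(e ⟨x, hx⟩ : ℕ), (e ⟨x, hx⟩).2⟩ : {y // y ∈ Y}) = e ⟨x, hx⟩ := rfl
    rw [h', Equiv.symm_apply_apply]
  have hfg : ∀ y ∈ Y, f (g y) = y := by
    intro y hy
    simp only [hf, hg, dif_pos hy, dif_pos (e.symm ⟨y, hy⟩).2]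
    have h' : (⟨(e.symm ⟨y, hy⟩ : ℕ), (e.symm ⟨y, hy⟩).2⟩ : {x // x ∈ X}) = e.symm ⟨y, hy⟩ := rfl
    rw [h', Equiv.apply_symm_apply]
  have himg : ∀ b : Finset ℕ, b ⊆ X → (b.image f).image g = b := by
    intro b hbX
    rw [Finset.image_image]
    rw [show (g ∘ f) = fun x => g (f x) from rfl,
      Finset.image_congr (fun x hx => hgf x (hbX hx))]
    exact Finset.image_id
  have himg' : ∀ T : Finset ℕ, T ⊆ Y → (T.image g).image f = T := by
    intro T hTY
    rw [Finset.image_image, show (f ∘ g) = fun y => f (g y) from rfl,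
      Finset.image_congr (fun y hy => hfg y (hTY hy))]
    exact Finset.image_id
  refine ⟨B.image (fun b => b.image f), ?_, ?_⟩
  · intro b' hb'
    simp only [Finset.mem_image] at hb'
    obtain ⟨b, hbB, rfl⟩ := hb'
    obtain ⟨hbX, hbk⟩ := hb b hbB
    refine ⟨fun y hy => ?_, ?_⟩
    · obtain ⟨x, hx, rfl⟩ := Finset.mem_image.mp hy
      exact hfX x (hbX hx)
    · rw [Finset.card_image_of_injOn, hbk]
      intro x hx x' hx' hxx
      rw [← hgf x (hbX hx), ← hgf x' (hbX hx'), hxx]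
  · intro T hTY hT6
    set S := T.image g with hS
    have hSX : S ⊆ X := by
      intro x hx; obtain ⟨y, hy, rfl⟩ := Finset.mem_image.mp hx; exact hgY y (hTY hy)
    have hScard : S.card = t := by
      rw [hS, Finset.card_image_of_injOn, hT6]
      intro y hy y' hy' hyy
      rw [← hfg y (hTY hy), ← hfg y' (hTY hy'), hyy]
    rw [← hd S hSX hScard]
    apply Finset.card_nbij' (fun b' => b'.image g) (fun b => b.image f)
    · intro b' hb'
      simp only [Finset.mem_coe, Finset.mem_filter, Finset.mem_image] at hb' ⊢
      obtain ⟨⟨b, hbB, rfl⟩, hTb⟩ := hb'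
      rw [himg b (hb b hbB).1]
      exact ⟨hbB, (Finset.image_subset_image hTb).trans (by rw [himg b (hb b hbB).1])⟩
    · intro b hbmem
      simp only [Finset.mem_coe, Finset.mem_filter, Finset.mem_image] at hbmem ⊢
      obtain ⟨hbB, hSb⟩ := hbmem
      refine ⟨⟨b, hbB, rfl⟩, ?_⟩
      calc T = (T.image g).image f := (himg' T hTY).symm
        _ ⊆ b.image f := Finset.image_subset_image hSb
    · intro b' hb'
      simp only [Finset.mem_coe, Finset.mem_filter, Finset.mem_image] at hb'
      obtain ⟨⟨b, hbB, rfl⟩, -⟩ := hb'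
      beta_reduce; rw [himg b (hb b hbB).1]
    · intro b hbmem
      simp only [Finset.mem_coe, Finset.mem_filter] at hbmem
      exact himg b (hb b hbmem.1).1

/-- On any 23-set, there is a family of blocks of each size `i ≤ 15`
whose containment counts are given by `aT`. -/
lemma families (Y : Finset ℕ) (hY : Y.card = 23)
    (h1 : SimpleDesignExists 6 23 7 5)
    (h2 : SimpleDesignExists 6 23 8 136)
    (h3 : SimpleDesignExists 6 23 9 200)
    (h4 : SimpleDesignExists 6 23 10 700)
    (h5 : SimpleDesignExists 6 23 11 1820)
    (h6 : SimpleDesignExists 6 23 12 3640)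
    (h7 : SimpleDesignExists 6 23 13 5720)
    (h8 : SimpleDesignExists 6 23 14 7150)
    (h9 : SimpleDesignExists 6 23 15 7150) :
    ∃ F : ℕ → Finset (Finset ℕ),
      (∀ i, i ≤ 15 → ∀ b ∈ F i, b ⊆ Y ∧ b.card = i) ∧
      (∀ i, i ≤ 15 → ∀ M ⊆ Y, M.card ≤ 6 →
        ((F i).filter (fun b => M ⊆ b)).card = aT M.card i) := by
  obtain ⟨B7, hb7, hd7⟩ := transport h1 Y hY
  obtain ⟨B8, hb8, hd8⟩ := transport h2 Y hY
  obtain ⟨B9, hb9, hd9⟩ := transport h3 Y hY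
  obtain ⟨B10, hb10, hd10⟩ := transport h4 Y hY
  obtain ⟨B11, hb11, hd11⟩ := transport h5 Y hY
  obtain ⟨B12, hb12, hd12⟩ := transport h6 Y hY
  obtain ⟨B13, hb13, hd13⟩ := transport h7 Y hY
  obtain ⟨B14, hb14, hd14⟩ := transport h8 Y hY
  obtain ⟨B15, hb15, hd15⟩ := transport h9 Y hY
  refine ⟨fun i => match i with
    | 7 => B7 | 8 => B8 | 9 => B9 | 10 => B10 | 11 => B11
    | 12 => B12 | 13 => B13 | 14 => B14 | 15 => B15
    | i => Y.powersetCard i, ?_, ?_⟩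
  · intro i hi b hbmem
    interval_cases i <;>
      first
      | (simp only [Finset.mem_powersetCard] at hbmem; exact hbmem)
      | exact hb7 b hbmem
      | exact hb8 b hbmem
      | exact hb9 b hbmem
      | exact hb10 b hbmem
      | exact hb11 b hbmem
      | exact hb12 b hbmem
      | exact hb13 b hbmem
      | exact hb14 b hbmem
      | exact hb15 b hbmem
  · intro i hi M hMY hm
    interval_cases i <;>
      first
      | exact complete_aT Y _ hY (by omega) M hMY hm
      | exact design_aT Y B7 7 hY (by omega) hb7 hd7 M hMY hm
      | exact design_aT Y B8 8 hY (by omega) hb8 hd8 M hMY hm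
      | exact design_aT Y B9 9 hY (by omega) hb9 hd9 M hMY hm
      | exact design_aT Y B10 10 hY (by omega) hb10 hd10 M hMY hm
      | exact design_aT Y B11 11 hY (by omega) hb11 hd11 M hMY hm
      | exact design_aT Y B12 12 hY (by omega) hb12 hd12 M hMY hm
      | exact design_aT Y B13 13 hY (by omega) hb13 hd13 M hMY hm
      | exact design_aT Y B14 14 hY (by omega) hb14 hd14 M hMY hm
      | exact design_aT Y B15 15 hY (by omega) hb15 hd15 M hMY hm

theorem designExists_6_46_15
    (h1 : SimpleDesignExists 6 23 7 5)
    (h2 : SimpleDesignExists 6 23 8 136)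
    (h3 : SimpleDesignExists 6 23 9 200)
    (h4 : SimpleDesignExists 6 23 10 700)
    (h5 : SimpleDesignExists 6 23 11 1820)
    (h6 : SimpleDesignExists 6 23 12 3640)
    (h7 : SimpleDesignExists 6 23 13 5720)
    (h8 : SimpleDesignExists 6 23 14 7150)
    (h9 : SimpleDesignExists 6 23 15 7150)
    : SimpleDesignExists 6 46 15 80423200 := by
  classical
  set X1 : Finset ℕ := Finset.range 23 with hX1
  set X2 : Finset ℕ := Finset.Ico 23 46 with hX2
  have hX1card : X1.card = 23 := by simp [hX1]
  have hX2card : X2.card = 23 := by simp [hX2]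
  obtain ⟨F, hFb, hFc⟩ := families X1 hX1card h1 h2 h3 h4 h5 h6 h7 h8 h9
  obtain ⟨G, hGb, hGc⟩ := families X2 hX2card h1 h2 h3 h4 h5 h6 h7 h8 h9
  have hX1lt : ∀ x ∈ X1, x < 23 := by intro x hx; simpa [hX1] using hx
  have hX2ge : ∀ x ∈ X2, 23 ≤ x ∧ x < 46 := by
    intro x hx; simpa [hX2] using hx
  refine ⟨Finset.range 46,
    (Finset.range 16).biUnion
      (fun i => ((F i) ×ˢ (G (15 - i))).image (fun p => p.1 ∪ p.2)), ?_, ?_, ?_⟩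
  · simp
  · intro b hbmem
    simp only [Finset.mem_biUnion, Finset.mem_image, Finset.mem_product,
      Finset.mem_range] at hbmem
    obtain ⟨i, hi, ⟨b1, b2⟩, ⟨hb1, hb2⟩, rfl⟩ := hbmem
    have hi' : i ≤ 15 := by omega
    obtain ⟨h1X, h1c⟩ := hFb i hi' b1 hb1
    obtain ⟨h2X, h2c⟩ := hGb (15 - i) (by omega) b2 hb2
    constructor
    · apply Finset.union_subset
      · intro x hx; exact Finset.mem_range.mpr (by have := hX1lt x (h1X hx); omega)
      · intro x hx; exact Finset.mem_range.mpr (hX2ge x (h2X hx)).2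
    · rw [Finset.card_union_of_disjoint, h1c, h2c]
      · omega
      · rw [Finset.disjoint_left]
        intro x hx1 hx2
        have := hX1lt x (h1X hx1)
        have := hX2ge x (h2X hx2)
        omega
  · intro T hTX hT6
    set T1 : Finset ℕ := T.filter (fun x => x < 23) with hT1
    set T2 : Finset ℕ := T.filter (fun x => ¬ x < 23) with hT2
    have hT1X : T1 ⊆ X1 := by
      intro x hx
      simp only [hT1, Finset.mem_filter] at hx
      exact Finset.mem_range.mpr hx.2
    have hT2X : T2 ⊆ X2 := by
      intro x hx
      simp only [hT2, Finset.mem_filter] at hx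
      have := Finset.mem_range.mp (hTX hx.1)
      simp only [hX2, Finset.mem_Ico]
      omega
    have hTsum : T1.card + T2.card = 6 := by
      rw [hT1, hT2, Finset.card_filter_add_card_filter_not, hT6]
    set m := T1.card with hm
    have hm6 : m ≤ 6 := by omega
    have hT2card : T2.card = 6 - m := by omega
    -- key: decomposition of containment
    have hsplit : ∀ i, i ≤ 15 → ∀ b1 ∈ F i, ∀ b2 ∈ G (15 - i),
        (T ⊆ b1 ∪ b2 ↔ T1 ⊆ b1 ∧ T2 ⊆ b2) := by
      intro i hi b1 hb1 b2 hb2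
      obtain ⟨h1X, -⟩ := hFb i hi b1 hb1
      obtain ⟨h2X, -⟩ := hGb (15 - i) (by omega) b2 hb2
      constructor
      · intro hTb
        constructor
        · intro x hx
          simp only [hT1, Finset.mem_filter] at hx
          rcases Finset.mem_union.mp (hTb hx.1) with h | h
          · exact h
          · exact absurd (hX2ge x (h2X h)).1 (by omega)
        · intro x hx
          simp only [hT2, Finset.mem_filter] at hx
          rcases Finset.mem_union.mp (hTb hx.1) with h | h
          · exact absurd (hX1lt x (h1X h)) hx.2
          · exact h
      · rintro ⟨ha, hb⟩ x hx
        by_cases hlt : x < 23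
        · exact Finset.mem_union_left _ (ha (by simp [hT1, hx, hlt]))
        · exact Finset.mem_union_right _ (hb (by
            simp only [hT2, Finset.mem_filter]; exact ⟨hx, hlt⟩))
    rw [Finset.filter_biUnion, Finset.card_biUnion]
    · have term : ∀ i ∈ Finset.range 16,
          ((((F i) ×ˢ (G (15 - i))).image (fun p => p.1 ∪ p.2)).filter
            (fun b => T ⊆ b)).card = aT m i * aT (6 - m) (15 - i) := by
        intro i hi
        have hi' : i ≤ 15 := by simpa using Nat.lt_succ_iff.mp (Finset.mem_range.mp hi)
        rw [Finset.filter_image, Finset.card_image_of_injOn]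
        · have hfe : ((F i) ×ˢ (G (15 - i))).filter (fun p => T ⊆ p.1 ∪ p.2)
              = ((F i).filter (fun b => T1 ⊆ b)) ×ˢ ((G (15 - i)).filter (fun b => T2 ⊆ b)) := by
            rw [← Finset.filter_product]
            apply Finset.filter_congr
            rintro ⟨b1, b2⟩ hp
            rw [Finset.mem_product] at hp
            simpa using hsplit i hi' b1 hp.1 b2 hp.2
          rw [hfe, Finset.card_product, ← hT2card,
            hFc i hi' T1 hT1X hm6, hGc (15 - i) (by omega) T2 hT2X (by omega)]
        · rintro ⟨b1, b2⟩ hp ⟨c1, c2⟩ hq heq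
          simp only [Finset.mem_coe, Finset.mem_filter, Finset.mem_product] at hp hq
          have e1 : b1 = c1 := by
            have k1 : ∀ (d1 : Finset ℕ), d1 ∈ F i → ∀ d2 ∈ G (15 - i),
                (d1 ∪ d2).filter (fun x => x < 23) = d1 := by
              intro d1 hd1 d2 hd2
              ext x
              simp only [Finset.mem_filter, Finset.mem_union]
              constructor
              · rintro ⟨h | h, hlt⟩
                · exact h
                · exact absurd (hX2ge x ((hGb (15 - i) (by omega) d2 hd2).1 h)).1 (by omega)
              · intro h
                exact ⟨Or.inl h, hX1lt x ((hFb i hi' d1 hd1).1 h)⟩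
            rw [← k1 b1 hp.1.1 b2 hp.1.2, ← k1 c1 hq.1.1 c2 hq.1.2]
            simp only at heq
            rw [heq]
          have e2 : b2 = c2 := by
            have k2 : ∀ (d1 : Finset ℕ), d1 ∈ F i → ∀ d2 ∈ G (15 - i),
                (d1 ∪ d2).filter (fun x => ¬ x < 23) = d2 := by
              intro d1 hd1 d2 hd2
              ext x
              simp only [Finset.mem_filter, Finset.mem_union]
              constructor
              · rintro ⟨h | h, hlt⟩
                · exact absurd (hX1lt x ((hFb i hi' d1 hd1).1 h)) hlt
                · exact h
              · intro h
                exact ⟨Or.inr h, by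
                  have := (hX2ge x ((hGb (15 - i) (by omega) d2 hd2).1 h)).1; omega⟩
            rw [← k2 b1 hp.1.1 b2 hp.1.2, ← k2 c1 hq.1.1 c2 hq.1.2]
            simp only at heq
            rw [heq]
          exact Prod.ext e1 e2
      rw [Finset.sum_congr rfl term]
      exact sum_check m hm6
    · -- pairwise disjointness of the filtered images
      intro i hi j hj hij
      simp only [Finset.mem_coe, Finset.mem_range] at hi hj
      rw [Function.onFun, Finset.disjoint_left]
      intro b hbi hbj
      have hcard1 : (b.filter (fun x => x < 23)).card = i := by
        simp only [Finset.mem_filter, Finset.mem_image, Finset.mem_product] at hbi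
        obtain ⟨⟨⟨b1, b2⟩, ⟨hb1, hb2⟩, rfl⟩, -⟩ := hbi
        have k1 : (b1 ∪ b2).filter (fun x => x < 23) = b1 := by
          ext x
          simp only [Finset.mem_filter, Finset.mem_union]
          constructor
          · rintro ⟨h | h, hlt⟩
            · exact h
            · exact absurd (hX2ge x ((hGb (15 - i) (by omega) b2 hb2).1 h)).1 (by omega)
          · intro h
            exact ⟨Or.inl h, hX1lt x ((hFb i (by omega) b1 hb1).1 h)⟩
        rw [k1]
        exact (hFb i (by omega) b1 hb1).2
      have hcard2 : (b.filter (fun x => x < 23)).card = j := by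
        simp only [Finset.mem_filter, Finset.mem_image, Finset.mem_product] at hbj
        obtain ⟨⟨⟨b1, b2⟩, ⟨hb1, hb2⟩, rfl⟩, -⟩ := hbj
        have k1 : (b1 ∪ b2).filter (fun x => x < 23) = b1 := by
          ext x
          simp only [Finset.mem_filter, Finset.mem_union]
          constructor
          · rintro ⟨h | h, hlt⟩
            · exact h
            · exact absurd (hX2ge x ((hGb (15 - j) (by omega) b2 hb2).1 h)).1 (by omega)
          · intro h
            exact ⟨Or.inl h, hX1lt x ((hFb j (by omega) b1 hb1).1 h)⟩
        rw [k1]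
        exact (hFb j (by omega) b1 hb1).2
      exact hij (hcard1 ▸ hcard2)
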